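/- For any instance I all of whose packets have length 1 or 2, any zealous optimal schedule Opt of cost Opt(I), any tie-breaking rule for Greedy, and any router i ≥ 1: the maximum of Δ_j(t) over all times t ≥ 0 and all routers j ≤ i is at most (1 − 1/2^{i−1})·Opt(I). -/
import Mathlib


/-!
# Packet forwarding on a line network

There are `k` active routers `1, …, k`; router `i` forwards packets to router `i+1`.
An instance is a finite collection of packets; packet `p` has a release time `rel p : ℕ`,
a start router `start p ∈ {1, …, k}` and a length `len p ≥ 1` with
`start p + len p − 1 ≤ k`; `p` must be forwarded by routers
`start p, start p + 1, …, start p + len p − 1` in this order.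
-/

/-- An instance of online packet forwarding on a line network with `k` active routers.
Packets are indexed by `Fin n`. -/
structure PInstance (k : ℕ) where
  n : ℕ
  rel : Fin n → ℕ
  start : Fin n → ℕ
  len : Fin n → ℕ

namespace PInstance

variable {k : ℕ}

/-- The instance is well-formed: start routers are at least `1`, lengths are at least `1`,
and every packet fits on the line: `start p + len p − 1 ≤ k`. -/
def Valid (I : PInstance k) : Prop :=
  ∀ p, 1 ≤ I.start p ∧ 1 ≤ I.len p ∧ I.start p + I.len p ≤ k + 1

/-- All packets of the instance have length `1` or `2`. -/
def Short (I : PInstance k) : Prop :=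
  ∀ p, I.len p = 1 ∨ I.len p = 2

/-- A schedule assigns to each packet `p` and each hop index `j < len p` (corresponding to
router `start p + j`) the time step at which that router forwards `p`.  Values at
hop indices `j ≥ len p` are irrelevant. -/
abbrev Sched (I : PInstance k) := Fin I.n → ℕ → ℕ

/-- `arr I S p j` is the time from which hop `j` of packet `p` is available:
packet `p` is available at its start router from time `rel p`, and a packet forwarded
at time `t` is available at the next router from time `t + 1`. -/
def arr (I : PInstance k) (S : Sched I) (p : Fin I.n) : ℕ → ℕ
  | 0 => I.rel p
  | j + 1 => S p j + 1

/-- Feasibility of a schedule: every hop is forwarded no earlier than the time from which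
it is available (this includes releases and the order of the hops), and each router
forwards at most one packet in each time step. -/
def Feasible (I : PInstance k) (S : Sched I) : Prop :=
  (∀ p j, j < I.len p → arr I S p j ≤ S p j) ∧
  (∀ p q jp jq, jp < I.len p → jq < I.len q →
    I.start p + jp = I.start q + jq → S p jp = S q jq → p = q)

/-- Completion time `C(p)`: one plus the time step in which the last router forwards `p`. -/
def comp (I : PInstance k) (S : Sched I) (p : Fin I.n) : ℕ :=
  S p (I.len p - 1) + 1

/-- Flow time of packet `p`: `C(p) − r(p)`. -/
def flowTime (I : PInstance k) (S : Sched I) (p : Fin I.n) : ℕ :=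
  comp I S p - I.rel p

/-- Cost of a schedule: the maximum flow time over all packets of the instance. -/
def cost (I : PInstance k) (S : Sched I) : ℕ :=
  Finset.univ.sup (flowTime I S)

/-- `Opt(I)`: the minimum cost over all feasible schedules. -/
noncomputable def opt (I : PInstance k) : ℕ :=
  sInf {c | ∃ S : Sched I, Feasible I S ∧ cost I S = c}

/-- Hop `j` of packet `p` is waiting (available but not yet forwarded) at time `t`. -/
def Waiting (I : PInstance k) (S : Sched I) (p : Fin I.n) (j t : ℕ) : Prop :=
  j < I.len p ∧ arr I S p j ≤ t ∧ t ≤ S p j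

/-- Remaining length `ℓ(p,t)`: the number of routers that still need to forward `p`
at time `t` (under schedule `S`). -/
noncomputable def remLen (I : PInstance k) (S : Sched I) (p : Fin I.n) (t : ℕ) : ℕ :=
  Set.ncard {j : ℕ | j < I.len p ∧ t ≤ S p j}

/-- Priority `π(p,t) = (t − r(p)) + ℓ(p,t)`. -/
noncomputable def prio (I : PInstance k) (S : Sched I) (p : Fin I.n) (t : ℕ) : ℕ :=
  (t - I.rel p) + remLen I S p t

/-- A schedule is zealous if, at every time step and every router at which some packet
is available (waiting), it forwards a packet there. -/
def Zealous (I : PInstance k) (S : Sched I) : Prop :=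
  ∀ t i, (∃ p j, Waiting I S p j t ∧ I.start p + j = i) →
    ∃ q jq, Waiting I S q jq t ∧ I.start q + jq = i ∧ S q jq = t

/-- `S` is a schedule that Greedy (with some tie-breaking rule) produces: it is feasible,
and in every time step, every router at which at least one packet is waiting forwards a
waiting packet of maximum priority among the packets waiting there. -/
def IsGreedy (I : PInstance k) (S : Sched I) : Prop :=
  Feasible I S ∧
  ∀ t i, (∃ p j, Waiting I S p j t ∧ I.start p + j = i) →
    ∃ q jq, Waiting I S q jq t ∧ I.start q + jq = i ∧ S q jq = t ∧
      ∀ p j, Waiting I S p j t → I.start p + j = i → prio I S p t ≤ prio I S q t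

/-- The number of packets released by time `t` that still need to be forwarded by
router `i` at time `t` under schedule `S`. -/
noncomputable def needs (I : PInstance k) (S : Sched I) (i t : ℕ) : ℕ :=
  Set.ncard {p : Fin I.n | I.rel p ≤ t ∧ ∃ j, j < I.len p ∧ I.start p + j = i ∧ t ≤ S p j}

end PInstance

/-- `Δ_i(t) = g_i(t) − a_i(t)`, where `g_i(t)` counts the packets (released by time `t`)
that Greedy's schedule `Sg` still needs to forward on router `i` at time `t`, and
`a_i(t)` is the analogous quantity for the schedule `So` of `Opt`. -/
noncomputable def delta {k : ℕ} (I : PInstance k) (Sg So : PInstance.Sched I)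
    (i t : ℕ) : ℤ :=
  (I.needs Sg i t : ℤ) - (I.needs So i t : ℤ)

/- ======================= auxiliary development ======================= -/

namespace PF

open PInstance

variable {k : ℕ} {I : PInstance k}

/-- Packets whose hop at router `i` has been forwarded before time `t`. -/
def Xset (I : PInstance k) (S : Sched I) (i t : ℕ) : Set (Fin I.n) :=
  {p | ∃ j, j < I.len p ∧ I.start p + j = i ∧ S p j < t}

/-- Packets released by `t` having a hop at router `i`. -/
def Uset (I : PInstance k) (i t : ℕ) : Set (Fin I.n) :=
  {p | I.rel p ≤ t ∧ ∃ j, j < I.len p ∧ I.start p + j = i}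

/-- Pending packets (the set counted by `needs`). -/
def Pset (I : PInstance k) (S : Sched I) (i t : ℕ) : Set (Fin I.n) :=
  {p : Fin I.n | I.rel p ≤ t ∧ ∃ j, j < I.len p ∧ I.start p + j = i ∧ t ≤ S p j}

noncomputable def X (I : PInstance k) (S : Sched I) (i t : ℕ) : ℕ := (Xset I S i t).ncard

lemma needs_eq_Pset (S : Sched I) (i t : ℕ) : I.needs S i t = (Pset I S i t).ncard := rfl

section basic

variable {S : PInstance.Sched I}

lemma rel_add_le (hf : I.Feasible S) (p : Fin I.n) :
    ∀ j, j < I.len p → I.rel p + j ≤ S p j := by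
  intro j
  induction j with
  | zero => intro h; simpa [arr] using hf.1 p 0 h
  | succ j ih =>
    intro h
    have h1 : j < I.len p := by omega
    have h2 := hf.1 p (j+1) h
    simp only [arr] at h2
    have := ih h1
    omega

lemma rel_le_S (hf : I.Feasible S) (p : Fin I.n) {j : ℕ} (h : j < I.len p) :
    I.rel p ≤ S p j := le_trans (Nat.le_add_right _ _) (rel_add_le hf p j h)

lemma rel_le_arr (hf : I.Feasible S) (p : Fin I.n) {j : ℕ} (h : j < I.len p) :
    I.rel p ≤ arr I S p j := by
  cases j with
  | zero => simp [arr]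
  | succ j =>
    simp only [arr]
    have : I.rel p ≤ S p j := rel_le_S hf p (by omega)
    omega

lemma hop_mono (hf : I.Feasible S) (p : Fin I.n) :
    ∀ j j', j ≤ j' → j' < I.len p → S p j + (j' - j) ≤ S p j' := by
  intro j j' hle
  induction j' with
  | zero => intro h; interval_cases j; simp
  | succ j' ih =>
    intro h
    rcases Nat.lt_or_ge j (j'+1) with h1 | h1
    · have h2 := hf.1 p (j'+1) h
      simp only [arr] at h2
      rcases Nat.lt_or_ge j' (I.len p) with h3 | h3
      · have := ih (by omega) h3
        omega
      · omega
    · have : j = j' + 1 := by omega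
      subst this; simp

/-- hop at a router is unique -/
lemma hop_unique {p : Fin I.n} {j j' i : ℕ} (h : I.start p + j = i) (h' : I.start p + j' = i) :
    j = j' := by omega

end basic

/-- Deadline lemma: under a feasible schedule of cost `F`, each hop is forwarded early
enough. -/
lemma deadline {S : Sched I} (hf : I.Feasible S) {p : Fin I.n} {j : ℕ}
    (h : j < I.len p) : S p j + (I.len p - j) ≤ I.rel p + I.cost S := by
  have hL : 1 ≤ I.len p := by omega
  have h1 : S p j + (I.len p - 1 - j) ≤ S p (I.len p - 1) :=
    le_trans (by omega) (hop_mono hf p j (I.len p - 1) (by omega) (by omega))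
  have h2 : I.flowTime S p ≤ I.cost S := Finset.le_sup (Finset.mem_univ p)
  have h3 : I.comp S p - I.rel p ≤ I.cost S := h2
  have h4 : I.comp S p ≤ I.rel p + I.cost S := by omega
  have h5 : I.comp S p = S p (I.len p - 1) + 1 := rfl
  omega


/-- Some packet's hop at router `i` is forwarded at time `t`. -/
def Crosses (I : PInstance k) (S : Sched I) (i t : ℕ) : Prop :=
  ∃ p j, j < I.len p ∧ I.start p + j = i ∧ S p j = t

section Xlemmas

variable {S : PInstance.Sched I}

lemma Xset_subset_Uset (hf : I.Feasible S) (i t : ℕ) : Xset I S i t ⊆ Uset I i t := by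
  rintro p ⟨j, hj, hji, hlt⟩
  exact ⟨le_trans (rel_le_S hf p hj) (le_of_lt hlt), j, hj, hji⟩

lemma Pset_eq (hf : I.Feasible S) (i t : ℕ) :
    Pset I S i t = Uset I i t \ Xset I S i t := by
  ext p
  constructor
  · rintro ⟨hr, j, hj, hji, hle⟩
    refine ⟨⟨hr, j, hj, hji⟩, ?_⟩
    rintro ⟨j', hj', hji', hlt⟩
    have heq : j = j' := hop_unique hji hji'
    rw [heq] at hle; omega
  · rintro ⟨⟨hr, j, hj, hji⟩, hnc⟩
    refine ⟨hr, j, hj, hji, ?_⟩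
    by_contra hcon
    exact hnc ⟨j, hj, hji, by omega⟩

lemma needs_eq (hf : I.Feasible S) (i t : ℕ) :
    I.needs S i t = (Uset I i t).ncard - X I S i t := by
  rw [needs_eq_Pset, Pset_eq hf, Set.ncard_diff (Xset_subset_Uset hf i t) (Set.toFinite _)]
  rfl

lemma X_le_Ucard (hf : I.Feasible S) (i t : ℕ) : X I S i t ≤ (Uset I i t).ncard :=
  Set.ncard_le_ncard (Xset_subset_Uset hf i t) (Set.toFinite _)

lemma delta_eq (Sg So : Sched I) (hg : I.Feasible Sg) (ho : I.Feasible So) (i t : ℕ) :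
    delta I Sg So i t = (X I So i t : ℤ) - (X I Sg i t : ℤ) := by
  unfold delta
  rw [needs_eq hg, needs_eq ho]
  have h1 := X_le_Ucard hg i t
  have h2 := X_le_Ucard ho i t
  omega

lemma X_zero (i : ℕ) : X I S i 0 = 0 := by
  have h : Xset I S i 0 = ∅ := by
    ext p
    simp only [Xset, Set.mem_setOf_eq, Set.mem_empty_iff_false, iff_false]
    rintro ⟨j, _, _, hlt⟩
    omega
  rw [X, h, Set.ncard_empty]

lemma X_mono_succ (i t : ℕ) : X I S i t ≤ X I S i (t+1) := by
  apply Set.ncard_le_ncard _ (Set.toFinite _)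
  rintro p ⟨j, hj, hji, hlt⟩
  exact ⟨j, hj, hji, by omega⟩

lemma Xset_succ_of_not_crosses (hnc : ¬ Crosses I S i t) :
    Xset I S i (t+1) = Xset I S i t := by
  ext p
  constructor
  · rintro ⟨j, hj, hji, hlt⟩
    rcases Nat.lt_or_ge (S p j) t with h | h
    · exact ⟨j, hj, hji, h⟩
    · exact absurd ⟨p, j, hj, hji, by omega⟩ hnc
  · rintro ⟨j, hj, hji, hlt⟩
    exact ⟨j, hj, hji, by omega⟩

lemma X_succ_of_crosses (hf : I.Feasible S) (hc : Crosses I S i t) :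
    X I S i (t+1) = X I S i t + 1 := by
  obtain ⟨p0, j0, hj0, hji0, hS0⟩ := hc
  have hset : Xset I S i (t+1) = insert p0 (Xset I S i t) := by
    ext p
    simp only [Set.mem_insert_iff]
    constructor
    · rintro ⟨j, hj, hji, hlt⟩
      rcases Nat.lt_or_ge (S p j) t with h | h
      · exact Or.inr ⟨j, hj, hji, h⟩
      · have hSt : S p j = t := by omega
        exact Or.inl (hf.2 p p0 j j0 hj hj0 (by omega) (by omega))
    · rintro (rfl | ⟨j, hj, hji, hlt⟩)
      · exact ⟨j0, hj0, hji0, by omega⟩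
      · exact ⟨j, hj, hji, by omega⟩
  have hnm : p0 ∉ Xset I S i t := by
    rintro ⟨j, hj, hji, hlt⟩
    have heq : j = j0 := hop_unique hji hji0
    rw [heq] at hlt; omega
  unfold X
  rw [hset, Set.ncard_insert_of_notMem hnm (Set.toFinite _)]

lemma X_succ_le (hf : I.Feasible S) (i t : ℕ) : X I S i (t+1) ≤ X I S i t + 1 := by
  by_cases hc : Crosses I S i t
  · exact le_of_eq (X_succ_of_crosses hf hc)
  · rw [X, Xset_succ_of_not_crosses hc]; exact Nat.le_succ _

lemma X_add_le (hf : I.Feasible S) (i t : ℕ) : ∀ m, X I S i (t+m) ≤ X I S i t + m := by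
  intro m
  induction m with
  | zero => simp
  | succ m ih =>
    have := X_succ_le hf i (t+m)
    have h2 : t + (m+1) = (t + m) + 1 := by omega
    rw [h2]
    omega

lemma X_le_time (hf : I.Feasible S) (i t : ℕ) : X I S i t ≤ t := by
  have h := X_add_le hf i 0 t
  rw [Nat.zero_add, X_zero] at h
  omega

/-- If the schedule forwards at router `i` in every step before `t`, it has crossed `t`
packets. -/
lemma X_eq_time (hf : I.Feasible S) (i : ℕ) :
    ∀ t, (∀ σ, σ < t → Crosses I S i σ) → X I S i t = t := by
  intro t
  induction t with
  | zero => intro _; exact X_zero i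
  | succ t ih =>
    intro h
    rw [X_succ_of_crosses hf (h t (by omega)), ih (fun σ hσ => h σ (by omega))]

end Xlemmas


section waiting

variable {Sg So : PInstance.Sched I}

lemma crosses_of_greedy (hG : I.IsGreedy Sg) {p : Fin I.n} {j t i : ℕ}
    (hw : I.Waiting Sg p j t) (hi : I.start p + j = i) : Crosses I Sg i t := by
  obtain ⟨q, jq, wq, hqi, hqt, _⟩ := hG.2 t i ⟨p, j, hw, hi⟩
  exact ⟨q, jq, wq.1, hqi, hqt⟩

/-- The `Δ₁ ≤ 0` base case, in `X` form: opt never gets ahead at router 1. -/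
lemma X_router_one (hV : I.Valid) (hOf : I.Feasible So) (hG : I.IsGreedy Sg) :
    ∀ t, X I So 1 t ≤ X I Sg 1 t := by
  intro t
  induction t with
  | zero => simp [X_zero]
  | succ t ih =>
    rcases Nat.lt_or_ge (X I Sg 1 t) (Uset I 1 t).ncard with hlt | hge
    · -- greedy has a pending packet at router 1, so it forwards one
      have hne : (Uset I 1 t \ Xset I Sg 1 t).Nonempty := by
        rw [← Pset_eq hG.1]
        have h1 : 0 < (Pset I Sg 1 t).ncard := by
          rw [Pset_eq hG.1, Set.ncard_diff (Xset_subset_Uset hG.1 1 t) (Set.toFinite _)]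
          have := X_le_Ucard hG.1 1 t
          unfold X at hlt this
          omega
        exact Set.nonempty_of_ncard_ne_zero (by omega)
      obtain ⟨p, hp⟩ := hne
      rw [← Pset_eq hG.1] at hp
      obtain ⟨hr, j, hj, hji, hle⟩ := hp
      have hj0 : j = 0 := by have := (hV p).1; omega
      subst hj0
      have hw : I.Waiting Sg p 0 t := ⟨hj, by simpa [arr] using hr, hle⟩
      have hc : Crosses I Sg 1 t := crosses_of_greedy hG hw hji
      have h1 := X_succ_of_crosses hG.1 hc
      have h2 := X_succ_le hOf 1 t
      omega
    · -- greedy has forwarded everything released so far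
      have h1 : Xset I So 1 (t+1) ⊆ Uset I 1 t := by
        rintro p ⟨j, hj, hji, hlt'⟩
        exact ⟨by have := rel_le_S hOf p hj; omega, j, hj, hji⟩
      have h2 : X I So 1 (t+1) ≤ (Uset I 1 t).ncard :=
        Set.ncard_le_ncard h1 (Set.toFinite _)
      have h3 := X_mono_succ (S := Sg) 1 t
      omega

end waiting


section main

variable {Sg So : PInstance.Sched I}

set_option maxHeartbeats 1000000 in
/-- Main recursion step: if `Δ_{i-1}` is bounded by `B ≤ F` everywhere, then `Δ_i` is
bounded by `(B+F)/2` everywhere. -/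
lemma main_step (hV : I.Valid) (hS : I.Short) (hOf : I.Feasible So)
    (hG : I.IsGreedy Sg) (i : ℕ) (hi : 2 ≤ i) (B : ℝ)
    (hB0 : 0 ≤ B) (hBF : B ≤ (I.cost So : ℝ))
    (hprev : ∀ τ, ((delta I Sg So (i-1) τ : ℤ) : ℝ) ≤ B) (t : ℕ) :
    ((delta I Sg So i t : ℤ) : ℝ) ≤ (B + (I.cost So : ℝ)) / 2 := by
  classical
  set F := I.cost So with hFdef
  have hgf : I.Feasible Sg := hG.1
  have hF0 : (0:ℝ) ≤ (F:ℝ) := by positivity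
  by_cases hD0 : delta I Sg So i t ≤ 0
  · have : ((delta I Sg So i t : ℤ):ℝ) ≤ 0 := by exact_mod_cast hD0
    linarith
  push_neg at hD0
  have hD : 1 ≤ delta I Sg So i t := hD0
  have hdel := delta_eq Sg So hgf hOf i t
  -- there is an idle step of Greedy at router i before t
  have hidle : ∃ σ, σ < t ∧ ¬ Crosses I Sg i σ := by
    by_contra hcon
    push_neg at hcon
    have h1 : X I Sg i t = t := X_eq_time hgf i t (fun σ hσ => hcon σ hσ)
    have h2 := X_le_time hOf i t
    omega
  obtain ⟨σ0, hσ0t, hσ0⟩ := hidle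
  have ht1 : 1 ≤ t := by omega
  set P : ℕ → Prop := fun σ => ¬ Crosses I Sg i σ with hPdef
  set s := Nat.findGreatest P (t-1) with hsdef
  have hPs : P s := Nat.findGreatest_spec (m := σ0) (by omega) hσ0
  have hsle : s ≤ t - 1 := Nat.findGreatest_le _
  have hmax : ∀ σ, s < σ → σ ≤ t-1 → Crosses I Sg i σ := by
    intro σ h1 h2
    by_contra hcon
    exact Nat.findGreatest_is_greatest h1 h2 hcon
  -- the difference does not increase after s+1
  have hdec : ∀ d u, u + d = t → s + 1 ≤ u →
      delta I Sg So i t ≤ (X I So i u : ℤ) - X I Sg i u := by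
    intro d
    induction d with
    | zero =>
      intro u hu _
      have : u = t := by omega
      subst this
      omega
    | succ d ih =>
      intro u hu hs1
      have hcross : Crosses I Sg i u := hmax u (by omega) (by omega)
      have h1 := X_succ_of_crosses hgf hcross
      have h2 := X_succ_le hOf i u
      have h3 := ih (u+1) (by omega) (by omega)
      omega
  have hDs : delta I Sg So i t ≤ (X I So i (s+1) : ℤ) - X I Sg i (s+1) :=
    hdec (t - (s+1)) (s+1) (by omega) (by omega)
  -- the set E of packets pending for Greedy at i but already done by Opt
  set E := Pset I Sg i (s+1) \ Pset I So i (s+1) with hEdef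
  have hED : delta I Sg So i t ≤ (E.ncard : ℤ) := by
    have hsub : Pset I Sg i (s+1) ⊆ E ∪ Pset I So i (s+1) := by
      intro p hp
      by_cases h : p ∈ Pset I So i (s+1)
      · exact Or.inr h
      · exact Or.inl ⟨hp, h⟩
    have hcard : (Pset I Sg i (s+1)).ncard ≤ E.ncard + (Pset I So i (s+1)).ncard :=
      le_trans (Set.ncard_le_ncard hsub (Set.toFinite _)) (Set.ncard_union_le _ _)
    have h1 := delta_eq Sg So hgf hOf i (s+1)
    have h2 : delta I Sg So i (s+1) = (I.needs Sg i (s+1) : ℤ) - I.needs So i (s+1) := rfl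
    rw [needs_eq_Pset, needs_eq_Pset] at h2
    omega
  -- structure of members of E
  have hEfact : ∀ e ∈ E, I.start e + 1 = i ∧ I.len e = 2 ∧ I.rel e ≤ s ∧
      s ≤ Sg e 0 ∧ s + 1 ≤ Sg e 1 ∧ I.rel e ≤ So e 0 ∧ So e 0 < So e 1 ∧ So e 1 ≤ s := by
    rintro e ⟨⟨hrel, j, hj, hji, hSg⟩, hnot⟩
    have hSoj : So e j ≤ s := by
      by_contra hcon
      exact hnot ⟨hrel, j, hj, hji, by omega⟩
    have hrels : I.rel e ≤ s := le_trans (rel_le_S hOf e hj) hSoj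
    have hnw : ¬ (arr I Sg e j ≤ s) := by
      intro hcon
      exact hPs (crosses_of_greedy hG ⟨hj, hcon, by omega⟩ hji)
    have hj0 : j ≠ 0 := by
      intro h0
      subst h0
      simp only [arr] at hnw
      omega
    have hj1 : j = 1 ∧ I.len e = 2 := by
      rcases hS e with h1 | h2
      · omega
      · exact ⟨by omega, h2⟩
    obtain ⟨hj1, hlen⟩ := hj1
    subst hj1
    have hSg0 : s ≤ Sg e 0 := by
      simp only [arr] at hnw
      omega
    have hSo01 : So e 0 + 1 ≤ So e 1 := hOf.1 e 1 hj
    exact ⟨by omega, hlen, hrels, hSg0, hSg, rel_le_S hOf e (by omega), by omega, hSoj⟩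
  have hEne : E.Nonempty := by
    apply Set.nonempty_of_ncard_ne_zero
    omega
  obtain ⟨s0, hs0E, hs0min⟩ := Set.exists_min_image E I.rel (Set.toFinite _) hEne
  set r0 := I.rel s0 with hr0def
  obtain ⟨hs0i, hs0len, hs0rel, hs0Sg0, hs0Sg1, _, _, _⟩ := hEfact s0 hs0E
  -- busy window with priority: greedy forwards old packets at router i-1 on [r0, s]
  have hwin : ∀ σ, r0 ≤ σ → σ ≤ s → ∃ w jw, jw < I.len w ∧ I.start w + jw = i - 1 ∧
      Sg w jw = σ ∧ I.rel w ≤ r0 := by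
    intro σ h1 h2
    have hw0 : I.Waiting Sg s0 0 σ := ⟨by omega, by simpa [arr] using h1, by omega⟩
    have hst : I.start s0 + 0 = i - 1 := by omega
    obtain ⟨q, jq, wq, hqi, hqσ, hmax2⟩ := hG.2 σ (i-1) ⟨s0, 0, hw0, hst⟩
    have hprio := hmax2 s0 0 hw0 hst
    have hrem0 : remLen I Sg s0 σ = 2 := by
      have hset : {j : ℕ | j < I.len s0 ∧ σ ≤ Sg s0 j} = {0, 1} := by
        ext j
        simp only [Set.mem_setOf_eq, Set.mem_insert_iff, Set.mem_singleton_iff]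
        constructor
        · rintro ⟨hj, _⟩; omega
        · rintro (rfl | rfl)
          · exact ⟨by omega, by omega⟩
          · exact ⟨by omega, by omega⟩
      rw [remLen, hset, Set.ncard_pair (by omega)]
    have hremq : remLen I Sg q σ ≤ 2 := by
      have hsub : {j : ℕ | j < I.len q ∧ σ ≤ Sg q j} ⊆ Set.Iio (I.len q) := fun j hj => hj.1
      have h3 := Set.ncard_le_ncard hsub (Set.toFinite _)
      rw [show Set.Iio (I.len q) = ↑(Finset.Iio (I.len q)) by simp,
        Set.ncard_coe_finset, Nat.card_Iio] at h3
      rw [remLen]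
      rcases hS q with h | h <;> omega
    have hrelq : I.rel q ≤ σ := le_trans (rel_le_arr hgf q wq.1) wq.2.1
    rw [prio, prio, hrem0] at hprio
    have hrelqr : I.rel q ≤ r0 := by omega
    exact ⟨q, jq, wq.1, hqi, hqσ, hrelqr⟩
  have hr0s : r0 ≤ s := hs0rel
  -- every Greedy crossing at router i-1 before s+1 is of an old packet with deadline
  have hA : ∀ p ∈ Xset I Sg (i-1) (s+1), I.rel p ≤ r0 := by
    rintro p ⟨j, hj, hji, hlt⟩
    rcases Nat.lt_or_ge (Sg p j) r0 with h | h
    · exact le_trans (rel_le_S hgf p hj) (by omega)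
    · obtain ⟨w, jw, hjw, hwi, hwσ, hwrel⟩ := hwin (Sg p j) h (by omega)
      have hpw : p = w := hgf.2 p w j jw hj hjw (by omega) (by omega)
      rw [hpw]
      exact hwrel
  have hAO : ∀ τ2, r0 + F ≤ τ2 → Xset I Sg (i-1) (s+1) ⊆ Xset I So (i-1) τ2 := by
    intro τ2 hτ p hp
    obtain ⟨j, hj, hji, hlt⟩ := hp
    have h1 := deadline hOf hj
    have h2 := hA p ⟨j, hj, hji, hlt⟩
    exact ⟨j, hj, hji, by omega⟩
  have hEO : ∀ τ2, s ≤ τ2 → E ⊆ Xset I So (i-1) τ2 := by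
    intro τ2 hτ e he
    obtain ⟨hei, helen, _, _, _, _, hso01, hso1⟩ := hEfact e he
    exact ⟨0, by omega, by omega, by omega⟩
  -- at most one element of E was forwarded by greedy at router i-1 before s+1
  have hint : (Xset I Sg (i-1) (s+1) ∩ E).ncard ≤ 1 := by
    rw [Set.ncard_le_one (Set.toFinite _)]
    rintro a ⟨⟨ja, hja, hjai, halt⟩, haE⟩ b ⟨⟨jb, hjb, hjbi, hblt⟩, hbE⟩
    obtain ⟨hai, halen, _, haSg0, _, _, _, _⟩ := hEfact a haE
    obtain ⟨hbi, hblen, _, hbSg0, _, _, _, _⟩ := hEfact b hbE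
    have hja0 : ja = 0 := by omega
    have hjb0 : jb = 0 := by omega
    subst hja0; subst hjb0
    exact hgf.2 a b 0 0 hja hjb (by omega) (by omega)
  have hAcard : ∀ τ2, r0 + F ≤ τ2 → s ≤ τ2 →
      X I Sg (i-1) (s+1) + E.ncard ≤ X I So (i-1) τ2 + 1 := by
    intro τ2 h1 h2
    have hsub : Xset I Sg (i-1) (s+1) ∪ E ⊆ Xset I So (i-1) τ2 :=
      Set.union_subset (hAO τ2 h1) (hEO τ2 h2)
    have h3 : (Xset I Sg (i-1) (s+1) ∪ E).ncard ≤ X I So (i-1) τ2 :=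
      Set.ncard_le_ncard hsub (Set.toFinite _)
    have h4 := Set.ncard_union_add_ncard_inter (Xset I Sg (i-1) (s+1)) E
      (Set.toFinite _) (Set.toFinite _)
    have h5 : X I Sg (i-1) (s+1) = (Xset I Sg (i-1) (s+1)).ncard := rfl
    omega
  -- count greedy crossings at i-1 over the window
  have hYg : ∀ d, r0 + d ≤ s + 1 →
      X I Sg (i-1) (r0 + d) = X I Sg (i-1) r0 + d := by
    intro d
    induction d with
    | zero => simp
    | succ d ih =>
      intro hle
      obtain ⟨w, jw, hjw, hwi, hwσ, _⟩ := hwin (r0 + d) (by omega) (by omega)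
      have hc : Crosses I Sg (i-1) (r0+d) := ⟨w, jw, hjw, hwi, hwσ⟩
      have h1 := X_succ_of_crosses hgf hc
      have h2 := ih (by omega)
      have h3 : r0 + (d+1) = (r0 + d) + 1 := by omega
      rw [h3, h1, h2]
      omega
  rcases Nat.lt_or_ge s (r0 + F) with hcase2 | hcase1
  · -- CASE 2 : short window. Count at time τ2 = r0 + F.
    set τ2 := r0 + F with hτ2def
    have h1 : X I Sg (i-1) (s+1) + E.ncard ≤ X I So (i-1) τ2 + 1 :=
      hAcard τ2 (le_refl _) (by omega)
    have h2 : X I Sg (i-1) τ2 ≤ X I Sg (i-1) (s+1) + (τ2 - (s+1)) := by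
      have := X_add_le hgf (i-1) (s+1) (τ2 - (s+1))
      have he : (s+1) + (τ2 - (s+1)) = τ2 := by omega
      rw [he] at this
      exact this
    -- |E| ≤ s - r0
    have hEcard : E.ncard ≤ s - r0 := by
      have hinj : Set.InjOn (fun e => So e 0) E := by
        intro a haE b hbE hab
        obtain ⟨hai, halen, _, _, _, _, _, _⟩ := hEfact a haE
        obtain ⟨hbi, hblen, _, _, _, _, _, _⟩ := hEfact b hbE
        exact hOf.2 a b 0 0 (by omega) (by omega) (by omega) hab
      have him : (fun e => So e 0) '' E ⊆ Set.Ico r0 s := by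
        rintro x ⟨e, heE, rfl⟩
        obtain ⟨_, _, _, _, _, hrelSo, hso01, hso1⟩ := hEfact e heE
        have hm := hs0min e heE
        show So e 0 ∈ Set.Ico r0 s
        rw [Set.mem_Ico]
        omega
      have h3 : ((fun e => So e 0) '' E).ncard ≤ (Set.Ico r0 s).ncard :=
        Set.ncard_le_ncard him (Set.toFinite _)
      rw [Set.ncard_image_of_injOn hinj] at h3
      rw [show Set.Ico r0 s = ↑(Finset.Ico r0 s) by simp, Set.ncard_coe_finset,
        Nat.card_Ico] at h3
      exact h3
    have hdelB := hprev τ2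
    have hdeq := delta_eq Sg So hgf hOf (i-1) τ2
    -- delta (i-1) τ2 ≥ 2 |E| - F  (integer arithmetic)
    have hkey : 2 * (E.ncard : ℤ) - (F : ℤ) ≤ delta I Sg So (i-1) τ2 := by
      rw [hdeq]
      have hts : s + 1 ≤ τ2 := by omega
      omega
    have hkeyR : 2 * (E.ncard : ℝ) - (F : ℝ) ≤ B := by
      calc 2 * (E.ncard : ℝ) - (F : ℝ) = ((2 * (E.ncard : ℤ) - (F : ℤ) : ℤ) : ℝ) := by
            push_cast; ring
        _ ≤ ((delta I Sg So (i-1) τ2 : ℤ) : ℝ) := by exact_mod_cast hkey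
        _ ≤ B := hdelB
    have hDE : ((delta I Sg So i t : ℤ) : ℝ) ≤ (E.ncard : ℝ) := by
      exact_mod_cast hED
    linarith
  · -- CASE 1 : long window. Count at time s.
    have h1 : X I Sg (i-1) (s+1) + E.ncard ≤ X I So (i-1) s + 1 :=
      hAcard s hcase1 (le_refl _)
    -- greedy crosses at i-1 at time s
    obtain ⟨w, jw, hjw, hwi, hwσ, _⟩ := hwin s hr0s (le_refl _)
    have hc : Crosses I Sg (i-1) s := ⟨w, jw, hjw, hwi, hwσ⟩
    have h2 := X_succ_of_crosses hgf hc
    have hdelB := hprev s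
    have hdeq := delta_eq Sg So hgf hOf (i-1) s
    have hkey : (E.ncard : ℤ) ≤ delta I Sg So (i-1) s := by
      rw [hdeq]
      omega
    have hkeyR : (E.ncard : ℝ) ≤ B := by
      calc (E.ncard : ℝ) = ((E.ncard : ℤ) : ℝ) := by push_cast; ring
        _ ≤ ((delta I Sg So (i-1) s : ℤ) : ℝ) := by exact_mod_cast hkey
        _ ≤ B := hdelB
    have hDE : ((delta I Sg So i t : ℤ) : ℝ) ≤ (E.ncard : ℝ) := by
      exact_mod_cast hED
    linarith

end main


section top

variable {Sg So : PInstance.Sched I}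

lemma all_bound (hV : I.Valid) (hS : I.Short) (hOf : I.Feasible So)
    (hG : I.IsGreedy Sg) :
    ∀ m, 1 ≤ m → ∀ t,
      ((delta I Sg So m t : ℤ) : ℝ) ≤ (1 - (1/2 : ℝ)^(m-1)) * (I.cost So : ℝ) := by
  intro m hm1
  induction m, hm1 using Nat.le_induction with
  | base =>
    intro t
    have h1 := X_router_one hV hOf hG t
    have h2 := delta_eq Sg So hG.1 hOf 1 t
    have h3 : delta I Sg So 1 t ≤ 0 := by omega
    have h4 : ((delta I Sg So 1 t : ℤ) : ℝ) ≤ 0 := by exact_mod_cast h3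
    simpa using h4
  | succ m hm ih =>
    intro t
    have hF0 : (0:ℝ) ≤ (I.cost So : ℝ) := by positivity
    have hc1 : ((1:ℝ)/2)^(m-1) ≤ 1 :=
      pow_le_one₀ (by norm_num) (by norm_num)
    have hc0 : (0:ℝ) ≤ ((1:ℝ)/2)^(m-1) := by positivity
    have hstep := main_step hV hS hOf hG (m+1) (by omega)
      ((1 - (1/2 : ℝ)^(m-1)) * (I.cost So : ℝ))
      (by nlinarith) (by nlinarith)
      (by simpa [Nat.add_sub_cancel] using ih) t
    have hmm : m - 1 + 1 = m := by omega
    have heq : ((1 - (1/2 : ℝ)^(m-1)) * (I.cost So : ℝ) + (I.cost So : ℝ)) / 2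
        = (1 - (1/2 : ℝ)^(m+1-1)) * (I.cost So : ℝ) := by
      have h2 : ((1:ℝ)/2)^(m+1-1) = (1/2:ℝ)^(m-1) * (1/2) := by
        rw [Nat.add_sub_cancel]
        conv_lhs => rw [← hmm]
        rw [pow_succ]
      rw [h2]
      ring
    rw [heq] at hstep
    exact hstep

end top

end PF

/-- For any instance all of whose packets have length `1` or `2`, any
zealous optimal schedule `So`, any tie-breaking rule for Greedy (schedule `Sg`), and any
router `i ≥ 1`: the maximum of `Δ_j(t)` over all times `t ≥ 0` and all routers `j ≤ i` is
at most `(1 − 1/2^{i−1})·Opt(I)`. -/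
theorem delta_upper_bound {k : ℕ} (I : PInstance k) (hV : I.Valid) (hS : I.Short)
    (So : PInstance.Sched I) (hOf : I.Feasible So) (hOz : I.Zealous So)
    (hOopt : I.cost So = I.opt)
    (Sg : PInstance.Sched I) (hG : I.IsGreedy Sg) (i : ℕ) (hi : 1 ≤ i) :
    ∀ (t j : ℕ), 1 ≤ j → j ≤ i →
      ((delta I Sg So j t : ℤ) : ℝ) ≤ (1 - 1 / 2 ^ (i - 1)) * (I.opt : ℝ) := by
  intro t j hj hji
  have h1 := PF.all_bound hV hS hOf hG j hj t
  have hF0 : (0:ℝ) ≤ (I.cost So : ℝ) := by positivity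
  have hpow : ((1:ℝ)/2)^(i-1) ≤ ((1:ℝ)/2)^(j-1) :=
    pow_le_pow_of_le_one (by norm_num) (by norm_num) (by omega)
  have hmono : ((1:ℝ) - (1/2:ℝ)^(j-1)) * (I.cost So : ℝ)
      ≤ ((1:ℝ) - (1/2:ℝ)^(i-1)) * (I.cost So : ℝ) := by
    apply mul_le_mul_of_nonneg_right _ hF0
    linarith
  have heq : ((1:ℝ) - (1/2:ℝ)^(i-1)) * (I.cost So : ℝ)
      = (1 - 1 / 2 ^ (i - 1)) * (I.opt : ℝ) := by
    rw [hOopt, div_pow, one_pow]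
  calc ((delta I Sg So j t : ℤ) : ℝ)
      ≤ ((1:ℝ) - (1/2:ℝ)^(j-1)) * (I.cost So : ℝ) := h1
    _ ≤ ((1:ℝ) - (1/2:ℝ)^(i-1)) * (I.cost So : ℝ) := hmono
    _ = (1 - 1 / 2 ^ (i - 1)) * (I.opt : ℝ) := heq
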